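/- arXiv:1601.04637 — 2 statements merged into one kernel-verified Lean document; each statement's English description precedes it below -/
import Mathlib

section
/- Let X be a nonnegative random variable with tail F̄ ∈ RV_{−α}, and write F̄(x) = x^{−α} L(x) with L slowly varying. Then L must be of one of the following forms: (i) L(x) = c(x); (ii) L(x) = c(x)/P[V > log x]; (iii) L(x) = c(x) P[U > log x]; (iv) L(x) = c(x) P[U > log x]/P[V > log x]; where U and V are long-tailed random variables and c(x) → c ∈ (0, ∞) as x → ∞. -/
open MeasureTheory ProbabilityTheory Filter Set
open scoped ENNReal Topology

noncomputable section

/-- The tail function `x ↦ P[X > x]` of a random variable `X`. -/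
def rvTail {Ω : Type*} [MeasurableSpace Ω] (P : Measure Ω) (X : Ω → ℝ) (x : ℝ) : ℝ :=
  (P {ω | x < X ω}).toReal

/-- `X` is regularly varying with index `-α`:
`P[X > xy]/P[X > x] → y^{-α}` as `x → ∞`, for every `y > 0`. -/
def RegVar {Ω : Type*} [MeasurableSpace Ω] (P : Measure Ω) (X : Ω → ℝ) (α : ℝ) : Prop :=
  ∀ y : ℝ, 0 < y →
    Tendsto (fun x => rvTail P X (x * y) / rvTail P X x) atTop (𝓝 (y ^ (-α)))

/-- The support of a (law) measure on `ℝ`: points all of whose neighbourhoods are charged. -/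
def measSupport (μ : Measure ℝ) : Set ℝ :=
  {x | ∀ ε > 0, μ (Set.Ioo (x - ε) (x + ε)) ≠ 0}

/-- `(X, Y)` follows a bivariate Sarmanov distribution with parameter `θ`
and kernels `φ1, φ2`:  the joint law of `(X,Y)` is
`(1 + θ φ1(x) φ2(y)) F(dx) G(dy)`, where `F`, `G` are the marginal laws,
`E[φ1(X)] = E[φ2(Y)] = 0` and `1 + θ φ1(x) φ2(y) ≥ 0` on `D_X × D_Y`,
and `Y ≥ 0`. -/
structure Sarmanov {Ω : Type*} [MeasurableSpace Ω] (P : Measure Ω)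
    (X Y : Ω → ℝ) (θ : ℝ) (φ1 φ2 : ℝ → ℝ) : Prop where
  measurable_X : Measurable X
  measurable_Y : Measurable Y
  measurable_φ1 : Measurable φ1
  measurable_φ2 : Measurable φ2
  nonneg_Y : ∀ ω, 0 ≤ Y ω
  joint : P.map (fun ω => (X ω, Y ω)) =
    ((P.map X).prod (P.map Y)).withDensity
      (fun p => ENNReal.ofReal (1 + θ * φ1 p.1 * φ2 p.2))
  mean_φ1 : ∫ ω, φ1 (X ω) ∂P = 0
  mean_φ2 : ∫ ω, φ2 (Y ω) ∂P = 0
  density_nonneg : ∀ x ∈ measSupport (P.map X), ∀ y ∈ measSupport (P.map Y),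
    0 ≤ 1 + θ * φ1 x * φ2 y

/-- A function `L : ℝ → ℝ` is slowly varying (at infinity). -/
def SlowlyVarying (L : ℝ → ℝ) : Prop :=
  ∀ t : ℝ, 0 < t → Tendsto (fun x => L (x * t) / L x) atTop (𝓝 1)

/-- `T` is the tail function of some random variable (i.e. of some probability law on `ℝ`). -/
def IsTailFun (T : ℝ → ℝ) : Prop :=
  ∃ μ : Measure ℝ, IsProbabilityMeasure μ ∧ ∀ x, T x = (μ (Set.Ioi x)).toReal

/-- `T` is the tail function of a long-tailed random variable:
`P[U > x + y] ~ P[U > x]` as `x → ∞` for every `y`. -/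
def LongTailedFun (T : ℝ → ℝ) : Prop :=
  IsTailFun T ∧ ∀ y : ℝ, Tendsto (fun x => T (x + y) / T x) atTop (𝓝 1)

/-- `f` is a subexponential density:
`∫_0^x f(x-y) f(y)/f(x) dy → 2 ∫_0^∞ f(u) du < ∞` as `x → ∞`. -/
def SubexpDensity (f : ℝ → ℝ) : Prop :=
  (∀ x, 0 ≤ f x) ∧ IntegrableOn f (Set.Ioi 0) ∧
    Tendsto (fun x => (∫ y in Set.Ioc (0:ℝ) x, f (x - y) * f y) / f x) atTop
      (𝓝 (2 * ∫ u in Set.Ioi (0:ℝ), f u))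

/-- `L` is of type (iii), with `TU` the tail of the long-tailed random variable `U`:
`L(x) = c(x) P[U > log x]` with `c(x) → c₀ ∈ (0,∞)`. -/
def TypeThree (L TU : ℝ → ℝ) : Prop :=
  ∃ (c : ℝ → ℝ) (c₀ : ℝ), 0 < c₀ ∧ Tendsto c atTop (𝓝 c₀) ∧
    LongTailedFun TU ∧ ∀ x ≥ 1, L x = c x * TU (Real.log x)

/-- `L` is of type (iv), with `TU` the tail of the long-tailed random variable `U`:
`L(x) = c(x) P[U > log x] / P[V > log x]` with `c(x) → c₀ ∈ (0,∞)`, `V` long-tailed. -/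
def TypeFour (L TU : ℝ → ℝ) : Prop :=
  ∃ (c : ℝ → ℝ) (c₀ : ℝ) (TV : ℝ → ℝ), 0 < c₀ ∧ Tendsto c atTop (𝓝 c₀) ∧
    LongTailedFun TU ∧ LongTailedFun TV ∧
    ∀ x ≥ 1, L x = c x * TU (Real.log x) / TV (Real.log x)

/-- Truncated moment `m(x) = ∫_0^x v^α F(dv) = E[X^α 1_{X ≤ x}]`. -/
def mTrunc {Ω : Type*} [MeasurableSpace Ω] (P : Measure Ω) (X : Ω → ℝ) (α : ℝ)
    (x : ℝ) : ℝ :=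
  ∫ ω in {ω | X ω ≤ x}, X ω ^ α ∂P

/-- Condition (DZ1): `lim_{x→∞} sup_{y ∈ [1,x]} L(y)/L(x) < ∞`. -/
def DZ1cond (L : ℝ → ℝ) : Prop :=
  ∃ M : ℝ, ∀ᶠ x : ℝ in atTop, ∀ y ∈ Set.Icc (1:ℝ) x, L y / L x ≤ M

/-- Condition (DZ2): `L` is of type (iii) or (iv), and `x ↦ L(eˣ)` is a
subexponential density. -/
def DZ2cond (L : ℝ → ℝ) : Prop :=
  (∃ TU, TypeThree L TU ∨ TypeFour L TU) ∧ SubexpDensity (fun u => L (Real.exp u))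

/-- Condition (DZ3): `L` is of type (iii) or (iv), `U ∈ S*` (its tail is a
subexponential density), and `P[Y > x] = o(x^{-α} P[U > log x])`. -/
def DZ3cond {Ω : Type*} [MeasurableSpace Ω] (P : Measure Ω) (Y : Ω → ℝ)
    (α : ℝ) (L : ℝ → ℝ) : Prop :=
  ∃ TU, (TypeThree L TU ∨ TypeFour L TU) ∧ SubexpDensity TU ∧
    (rvTail P Y) =o[atTop] (fun x => x ^ (-α) * TU (Real.log x))

/-- Condition (DZ4): `E[X^α] = ∞`, `P[Y > x] = o(P[X > x]/m(x))` and
`limsup_{x→∞} sup_{√x ≤ y ≤ x} L(y)/L(x) < ∞`. -/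
def DZ4cond {Ω : Type*} [MeasurableSpace Ω] (P : Measure Ω) (X Y : Ω → ℝ)
    (α : ℝ) (L : ℝ → ℝ) : Prop :=
  (¬ Integrable (fun ω => X ω ^ α) P) ∧
  (rvTail P Y) =o[atTop] (fun x => rvTail P X x / mTrunc P X α x) ∧
  ∃ M : ℝ, ∀ᶠ x : ℝ in atTop, ∀ y ∈ Set.Icc (Real.sqrt x) x, L y / L x ≤ M

end

noncomputable section FourTypesAux

def primB (q : ℝ → ℝ) (u : ℝ) : ℝ := ∫ s in (0:ℝ)..u, q s

def mkTail (q : ℝ → ℝ) (u : ℝ) : ℝ :=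
  if u ≤ 0 then 1 else Real.exp (-primB q u) / (1 + max u 0)

variable {q : ℝ → ℝ}

lemma primB_zero : primB q 0 = 0 := intervalIntegral.integral_same

lemma primB_add (hqi : ∀ a b : ℝ, IntervalIntegrable q volume a b) (u v : ℝ) :
    primB q v - primB q u = ∫ s in u..v, q s := by
  have := intervalIntegral.integral_add_adjacent_intervals (hqi 0 u) (hqi u v)
  simp only [primB]; linarith

lemma primB_mono (hq0 : ∀ s, 0 ≤ q s)
    (hqi : ∀ a b : ℝ, IntervalIntegrable q volume a b) : Monotone (primB q) := by
  intro u v huv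
  have h := primB_add hqi u v
  have h2 : 0 ≤ ∫ s in u..v, q s :=
    intervalIntegral.integral_nonneg huv (fun s _ => hq0 s)
  linarith

lemma primB_nonneg (hq0 : ∀ s, 0 ≤ q s)
    (hqi : ∀ a b : ℝ, IntervalIntegrable q volume a b) {u : ℝ} (hu : 0 ≤ u) :
    0 ≤ primB q u := by
  have := primB_mono hq0 hqi hu
  simpa [primB_zero] using this

lemma mkTail_eval {u : ℝ} (hu : 0 ≤ u) :
    mkTail q u = Real.exp (-primB q u) / (1 + u) := by
  unfold mkTail
  by_cases h : u ≤ 0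
  · have h0 : u = 0 := le_antisymm h hu
    subst h0
    simp [primB_zero]
  · rw [if_neg h, max_eq_left hu]

lemma mkTail_pos (u : ℝ) : 0 < mkTail q u := by
  unfold mkTail
  by_cases h : u ≤ 0
  · simp [h]
  · rw [if_neg h]
    have : (0:ℝ) < 1 + max u 0 := by positivity
    positivity

lemma mkTail_le_one (hq0 : ∀ s, 0 ≤ q s)
    (hqi : ∀ a b : ℝ, IntervalIntegrable q volume a b) (u : ℝ) :
    mkTail q u ≤ 1 := by
  unfold mkTail
  by_cases h : u ≤ 0
  · simp [h]
  · rw [if_neg h]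
    push_neg at h
    have hB : 0 ≤ primB q u := primB_nonneg hq0 hqi h.le
    have h1 : Real.exp (-primB q u) ≤ 1 := Real.exp_le_one_iff.2 (by linarith)
    have h2 : (0:ℝ) < 1 + max u 0 := by positivity
    rw [div_le_one h2]
    have : (1:ℝ) ≤ 1 + max u 0 := by
      have := le_max_right u 0; nlinarith [le_max_left u 0]
    linarith

lemma mkTail_antitone (hq0 : ∀ s, 0 ≤ q s)
    (hqi : ∀ a b : ℝ, IntervalIntegrable q volume a b) : Antitone (mkTail q) := by
  intro u v huv
  by_cases hv : v ≤ 0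
  · have hu : u ≤ 0 := le_trans huv hv
    unfold mkTail; rw [if_pos hu, if_pos hv]
  · push_neg at hv
    by_cases hu : u ≤ 0
    · have h1 : mkTail q u = 1 := by unfold mkTail; rw [if_pos hu]
      rw [h1]; exact mkTail_le_one hq0 hqi v
    · push_neg at hu
      rw [mkTail_eval hu.le, mkTail_eval hv.le]
      have hBu : primB q u ≤ primB q v := primB_mono hq0 hqi huv
      exact div_le_div₀ (Real.exp_pos _).le (Real.exp_le_exp.2 (by linarith))
        (by linarith) (by linarith)

lemma mkTail_continuous (hqi : ∀ a b : ℝ, IntervalIntegrable q volume a b) :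
    Continuous (mkTail q) := by
  have hB : Continuous (primB q) := intervalIntegral.continuous_primitive hqi 0
  have hden : Continuous (fun u : ℝ => 1 + max u 0) :=
    continuous_const.add (continuous_id.max continuous_const)
  have hg : Continuous (fun u : ℝ => Real.exp (-primB q u) / (1 + max u 0)) := by
    apply Continuous.div (Real.continuous_exp.comp hB.neg) hden
    intro u
    have : (0:ℝ) < 1 + max u 0 := by positivity
    exact this.ne'
  exact Continuous.if_le continuous_const hg continuous_id continuous_const
    (fun u hu => by have h0 : u = 0 := hu; subst h0; simp [primB_zero])

lemma mkTail_tendsto_atBot : Tendsto (mkTail q) atBot (𝓝 1) := by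
  refine tendsto_const_nhds.congr' ?_
  filter_upwards [eventually_le_atBot (0:ℝ)] with u hu
  simp [mkTail, hu]

lemma mkTail_tendsto_atTop (hq0 : ∀ s, 0 ≤ q s)
    (hqi : ∀ a b : ℝ, IntervalIntegrable q volume a b) :
    Tendsto (mkTail q) atTop (𝓝 0) := by
  have hinv : Tendsto (fun u : ℝ => (1 + u)⁻¹) atTop (𝓝 0) :=
    tendsto_inv_atTop_zero.comp (tendsto_atTop_add_const_left _ 1 tendsto_id)
  refine tendsto_of_tendsto_of_tendsto_of_le_of_le' tendsto_const_nhds hinv ?_ ?_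
  · filter_upwards with u using (mkTail_pos u).le
  · filter_upwards [eventually_ge_atTop (0:ℝ)] with u hu
    rw [mkTail_eval hu]
    have hB : 0 ≤ primB q u := primB_nonneg hq0 hqi hu
    have h1 : Real.exp (-primB q u) ≤ 1 := Real.exp_le_one_iff.2 (by linarith)
    have h2 : (0:ℝ) < 1 + u := by linarith
    rw [inv_eq_one_div]
    exact div_le_div₀ zero_le_one h1 h2 le_rfl

lemma window_tendsto_zero (hq : Tendsto q atTop (𝓝 0)) (y : ℝ) :
    Tendsto (fun u => ∫ s in u..(u+y), q s) atTop (𝓝 0) := by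
  rw [Metric.tendsto_atTop]
  intro δ hδ
  have hC : 0 < δ / (|y| + 1) := by positivity
  obtain ⟨N, hN⟩ := (Metric.tendsto_atTop.1 hq) (δ / (|y| + 1)) hC
  refine ⟨N + |y|, fun u hu => ?_⟩
  have hbound : ∀ x ∈ Set.uIoc u (u+y), ‖q x‖ ≤ δ / (|y| + 1) := by
    intro x hx
    have h1 : min u (u+y) < x := hx.1
    have h2 : N ≤ x := by
      have : u - |y| ≤ min u (u+y) := by
        rcases le_total 0 y with h | h
        · rw [min_eq_left (by linarith)]
          have : |y| = y := abs_of_nonneg h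
          linarith [abs_nonneg y]
        · rw [min_eq_right (by linarith)]
          have : |y| = -y := abs_of_nonpos h
          linarith
      nlinarith [abs_nonneg y]
    have := hN x h2
    rw [Real.dist_eq, sub_zero] at this
    exact le_of_lt (by simpa using this)
  have hle := intervalIntegral.norm_integral_le_of_norm_le_const hbound
  rw [Real.dist_eq, sub_zero]
  have : |u + y - u| = |y| := by ring_nf
  rw [this] at hle
  calc |∫ s in u..(u+y), q s| ≤ δ / (|y| + 1) * |y| := by simpa using hle
    _ < δ := by
        rw [div_mul_eq_mul_div, div_lt_iff₀ (by positivity)]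
        nlinarith [abs_nonneg y]

lemma ratio_aux (y : ℝ) :
    Tendsto (fun u : ℝ => (1 + u) / (1 + u + y)) atTop (𝓝 1) := by
  have h0 : Tendsto (fun u : ℝ => y / (1 + u)) atTop (𝓝 0) := by
    apply Tendsto.div_atTop (tendsto_const_nhds)
    exact tendsto_atTop_add_const_left _ 1 tendsto_id
  have h1 : Tendsto (fun u : ℝ => 1 + y / (1 + u)) atTop (𝓝 (1+0)) :=
    tendsto_const_nhds.add h0
  rw [add_zero] at h1
  have h2 := h1.inv₀ one_ne_zero
  rw [inv_one] at h2
  refine h2.congr' ?_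
  filter_upwards [eventually_gt_atTop (0:ℝ)] with u hu
  have hne : (1:ℝ) + u ≠ 0 := by linarith
  rw [show (1:ℝ) + y/(1+u) = (1+u+y)/(1+u) by rw [add_div, div_self hne]]
  rw [inv_div]

lemma mkTail_ratio (hqi : ∀ a b : ℝ, IntervalIntegrable q volume a b)
    (hq : Tendsto q atTop (𝓝 0)) (y : ℝ) :
    Tendsto (fun u => mkTail q (u+y) / mkTail q u) atTop (𝓝 1) := by
  have h1 : Tendsto (fun u => Real.exp (-(∫ s in u..(u+y), q s))) atTop (𝓝 1) := by
    have hn := (window_tendsto_zero hq y).neg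
    rw [neg_zero] at hn
    have := (Real.continuous_exp.tendsto 0).comp hn
    simpa [Function.comp_def] using this
  have h2 := ratio_aux y
  have h3 := h1.mul h2
  rw [mul_one] at h3
  refine h3.congr' ?_
  filter_upwards [eventually_ge_atTop (1 + |y|)] with u hu
  have hu0 : (0:ℝ) ≤ u := by nlinarith [abs_nonneg y]
  have huy : (0:ℝ) ≤ u + y := by
    have := neg_abs_le y; linarith
  rw [mkTail_eval huy, mkTail_eval hu0]
  have hBdiff : primB q (u+y) - primB q u = ∫ s in u..(u+y), q s := primB_add hqi u (u+y)
  have hne1 : Real.exp (-primB q u) ≠ 0 := Real.exp_ne_zero _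
  have hne2 : (1:ℝ) + u ≠ 0 := by linarith
  have hne3 : (1:ℝ) + u + y ≠ 0 := by
    have := neg_abs_le y; nlinarith
  have e1 : Real.exp (-(∫ s in u..(u+y), q s)) =
      Real.exp (-primB q (u+y)) / Real.exp (-primB q u) := by
    rw [← Real.exp_sub]; congr 1; linarith
  rw [e1, div_div_div_comm, div_div_eq_mul_div, mul_div_assoc]
  ring_nf

lemma mkTail_isTailFun (hq0 : ∀ s, 0 ≤ q s)
    (hqi : ∀ a b : ℝ, IntervalIntegrable q volume a b) :
    ∃ μ : Measure ℝ, IsProbabilityMeasure μ ∧ ∀ x, mkTail q x = (μ (Set.Ioi x)).toReal := by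
  set F : StieltjesFunction ℝ :=
    { toFun := fun u => 1 - mkTail q u
      mono' := fun a b hab => by
        have := mkTail_antitone hq0 hqi hab; simp only; linarith
      right_continuous' := fun x =>
        ((continuous_const.sub (mkTail_continuous hqi)).continuousAt).continuousWithinAt }
  have hFbot : Tendsto F atBot (𝓝 0) := by
    have h := (tendsto_const_nhds (x := (1:ℝ)) (f := atBot)).sub (mkTail_tendsto_atBot (q := q))
    rw [sub_self] at h
    exact h
  have hFtop : Tendsto F atTop (𝓝 1) := by
    have h := (tendsto_const_nhds (x := (1:ℝ)) (f := atTop)).sub (mkTail_tendsto_atTop hq0 hqi)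
    rw [sub_zero] at h
    exact h
  refine ⟨F.measure, F.isProbabilityMeasure hFbot hFtop, fun x => ?_⟩
  have hcompl : Set.Ioi x = (Set.Iic x)ᶜ := by rw [Set.compl_Iic]
  have hprob : IsProbabilityMeasure F.measure := F.isProbabilityMeasure hFbot hFtop
  rw [hcompl, measure_compl measurableSet_Iic (measure_ne_top _ _), measure_univ,
    F.measure_Iic hFbot]
  have hT1 : mkTail q x ≤ 1 := mkTail_le_one hq0 hqi x
  have hT0 : 0 < mkTail q x := mkTail_pos x
  have : F x - 0 = 1 - mkTail q x := by simp [F]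
  rw [this]
  rw [show (1 : ℝ≥0∞) = ENNReal.ofReal 1 by simp]
  rw [← ENNReal.ofReal_sub 1 (by linarith)]
  rw [show (1:ℝ) - (1 - mkTail q x) = mkTail q x by ring]
  rw [ENNReal.toReal_ofReal hT0.le]

end FourTypesAux

/-- Characterization of the slowly varying part of a regularly varying tail:
`L` is of one of the four forms (i)-(iv). -/
theorem slowly_varying_four_types {Ω : Type*} [MeasurableSpace Ω]
    (P : Measure Ω) [IsProbabilityMeasure P] (X : Ω → ℝ) (α : ℝ) (L : ℝ → ℝ)
    (hα : 0 < α) (hX0 : ∀ ω, 0 ≤ X ω) (hRV : RegVar P X α)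
    (hL : ∀ x > 0, rvTail P X x = x ^ (-α) * L x) (hsv : SlowlyVarying L) :
    (∃ (c : ℝ → ℝ) (c₀ : ℝ), 0 < c₀ ∧ Tendsto c atTop (𝓝 c₀) ∧
      ∀ x ≥ 1, L x = c x) ∨
    (∃ (c : ℝ → ℝ) (c₀ : ℝ) (TV : ℝ → ℝ), 0 < c₀ ∧ Tendsto c atTop (𝓝 c₀) ∧
      LongTailedFun TV ∧ ∀ x ≥ 1, L x = c x / TV (Real.log x)) ∨
    (∃ TU, TypeThree L TU) ∨
    (∃ TU, TypeFour L TU) := by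
  classical
  set T : ℝ → ℝ := rvTail P X with hT
  have hTnonneg : ∀ x, 0 ≤ T x := fun x => ENNReal.toReal_nonneg
  have hTanti : Antitone T := by
    intro a b hab
    exact ENNReal.toReal_mono (measure_ne_top P _)
      (measure_mono (fun ω hω => lt_of_le_of_lt hab hω))
  have hTpos : ∀ x, 0 < T x := by
    intro x
    rcases lt_or_eq_of_le (hTnonneg x) with h | h
    · exact h
    exfalso
    have h0 : T x = 0 := h.symm
    have h2 := hRV 2 two_pos
    have hz : Tendsto (fun z => T (z * 2) / T z) atTop (𝓝 0) := by
      refine tendsto_const_nhds.congr' ?_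
      filter_upwards [eventually_ge_atTop (max x 0)] with z hz
      have hz0 : (0:ℝ) ≤ z := le_trans (le_max_right _ _) hz
      have hzx : x ≤ z * 2 := by
        have : x ≤ z := le_trans (le_max_left _ _) hz
        nlinarith
      have hzz : T (z * 2) = 0 := le_antisymm (h0 ▸ hTanti hzx) (hTnonneg _)
      simp [hzz]
    have huniq := tendsto_nhds_unique hz h2
    have hp : (0:ℝ) < (2:ℝ) ^ (-α) := Real.rpow_pos_of_pos two_pos _
    rw [← huniq] at hp
    exact lt_irrefl _ hp
  have hLpos : ∀ x : ℝ, 0 < x → 0 < L x := by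
    intro x hx
    have h1 := hTpos x
    rw [hL x hx] at h1
    by_contra h
    push_neg at h
    nlinarith [Real.rpow_pos_of_pos hx (-α)]
  set m : ℝ → ℝ := fun u => Real.log (T (Real.exp u)) with hmdef
  have hmanti : Antitone m := by
    intro a b hab
    exact Real.log_le_log (hTpos _) (hTanti (Real.exp_le_exp.2 hab))
  set g : ℝ → ℝ := fun u => α * u + m u with hgdef
  have hgv : ∀ v, g v = α * v + m v := fun _ => rfl
  have hgm : Measurable g :=
    (measurable_const.mul measurable_id).add
      (Real.measurable_log.comp (hTanti.measurable.comp Real.measurable_exp))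
  have hgi : ∀ a b : ℝ, IntervalIntegrable g volume a b := fun a b =>
    ((continuous_const.mul continuous_id).intervalIntegrable a b).add
      hmanti.intervalIntegrable
  have hgL : ∀ u, g u = Real.log (L (Real.exp u)) := by
    intro u
    have hexp : (0:ℝ) < Real.exp u := Real.exp_pos u
    have h1 : T (Real.exp u) = Real.exp u ^ (-α) * L (Real.exp u) := hL _ hexp
    have h2 : Real.log (T (Real.exp u)) =
        Real.log (Real.exp u ^ (-α)) + Real.log (L (Real.exp u)) := by
      rw [h1, Real.log_mul (ne_of_gt (Real.rpow_pos_of_pos hexp _))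
        (ne_of_gt (hLpos _ hexp))]
    have h3 : Real.log (Real.exp u ^ (-α)) = -α * u := by
      rw [Real.log_rpow hexp, Real.log_exp]
    have h4 : m u = Real.log (T (Real.exp u)) := rfl
    rw [hgv, h4, h2, h3]; ring
  have key : ∀ s : ℝ, 0 < s → Tendsto (fun u => g (u+s) - g u) atTop (𝓝 0) := by
    intro s hs
    have h1 := (hsv (Real.exp s) (Real.exp_pos s)).comp Real.tendsto_exp_atTop
    have h2 := (Real.continuousAt_log one_ne_zero).tendsto.comp h1
    rw [Real.log_one] at h2
    refine h2.congr ?_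
    intro u
    show Real.log (L (Real.exp u * Real.exp s) / L (Real.exp u)) = g (u+s) - g u
    rw [← Real.exp_add,
      Real.log_div (ne_of_gt (hLpos _ (Real.exp_pos _))) (ne_of_gt (hLpos _ (Real.exp_pos _))),
      hgL, hgL]
  set ε : ℝ → ℝ := fun u => g (u+1) - g u with hεdef
  have hε0 : Tendsto ε atTop (𝓝 0) := key 1 one_pos
  have hεi : ∀ a b : ℝ, IntervalIntegrable ε volume a b := by
    intro a b
    have h1 : IntervalIntegrable (fun u => g (u+1)) volume a b := by
      have := (hgi (a+1) (b+1)).comp_add_right 1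
      simpa using this
    exact h1.sub (hgi a b)
  set εp : ℝ → ℝ := fun u => max (ε u) 0 with hεpdef
  set εm : ℝ → ℝ := fun u => max (-ε u) 0 with hεmdef
  have hεp0 : ∀ s, 0 ≤ εp s := fun s => le_max_right _ _
  have hεm0 : ∀ s, 0 ≤ εm s := fun s => le_max_right _ _
  have hεpi : ∀ a b : ℝ, IntervalIntegrable εp volume a b := fun a b =>
    ⟨(hεi a b).1.pos_part, (hεi a b).2.pos_part⟩
  have hεmi : ∀ a b : ℝ, IntervalIntegrable εm volume a b := fun a b =>
    ⟨(hεi a b).1.neg.pos_part, (hεi a b).2.neg.pos_part⟩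
  have hcontmax : Continuous (fun a : ℝ => max a 0) := continuous_id.max continuous_const
  have hεptend : Tendsto εp atTop (𝓝 0) := by
    have h := (hcontmax.tendsto (0:ℝ)).comp hε0
    have h2 : Tendsto (fun u => max (ε u) 0) atTop (𝓝 0) := by simpa [Function.comp_def] using h
    exact h2
  have hεmtend : Tendsto εm atTop (𝓝 0) := by
    have hn := hε0.neg
    rw [neg_zero] at hn
    have h := (hcontmax.tendsto (0:ℝ)).comp hn
    have h2 : Tendsto (fun u => max (-ε u) 0) atTop (𝓝 0) := by simpa [Function.comp_def] using h
    exact h2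
  have hεsub : ∀ u, εp u - εm u = ε u := fun u =>
    max_zero_sub_max_neg_zero_eq_self (ε u)
  -- key shift identity
  have hshift : ∀ u : ℝ, (∫ s in (0:ℝ)..u, ε s) =
      (∫ s in u..(u+1), g s) - ∫ s in (0:ℝ)..1, g s := by
    intro u
    have hcomp : IntervalIntegrable (fun s => g (s+1)) volume 0 u := by
      have := (hgi (0+1) (u+1)).comp_add_right 1
      simpa using this
    have h1 : (∫ s in (0:ℝ)..u, ε s) =
        (∫ s in (0:ℝ)..u, g (s+1)) - ∫ s in (0:ℝ)..u, g s := by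
      rw [← intervalIntegral.integral_sub hcomp (hgi 0 u)]
    have h2 : (∫ s in (0:ℝ)..u, g (s+1)) = ∫ s in (1:ℝ)..(u+1), g s := by
      have := intervalIntegral.integral_comp_add_right (a := 0) (b := u) (f := g) 1
      simpa using this
    have h3 := intervalIntegral.integral_add_adjacent_intervals (hgi 0 1) (hgi 1 (u+1))
    have h4 := intervalIntegral.integral_add_adjacent_intervals (hgi 0 u) (hgi u (u+1))
    rw [h1, h2]; linarith
  have hwin : ∀ u : ℝ, (∫ s in u..(u+1), g s) = ∫ s in (0:ℝ)..1, g (u + s) := by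
    intro u
    have := intervalIntegral.integral_comp_add_left (a := 0) (b := 1) (f := g) u
    simpa using this.symm
  -- dominated convergence
  have hball : ∀ᶠ y : ℝ in 𝓝 0, |y| < 1 := by
    filter_upwards [Metric.ball_mem_nhds (0:ℝ) one_pos] with y hy
    simpa [Real.dist_eq] using hy
  have hDCT : Tendsto (fun u => ∫ s in Ioc (0:ℝ) 1, (g (u+s) - g u)) atTop (𝓝 0) := by
    have h0 : (∫ s in Ioc (0:ℝ) 1, (0:ℝ)) = 0 := integral_zero _ _
    have hmain : Tendsto (fun u => ∫ s in Ioc (0:ℝ) 1, (g (u+s) - g u)) atTop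
        (𝓝 (∫ s in Ioc (0:ℝ) 1, (0:ℝ))) := by
      refine tendsto_integral_filter_of_dominated_convergence
        (μ := volume.restrict (Ioc (0:ℝ) 1)) (fun _ => α + 1) ?_ ?_ ?_ ?_
      · filter_upwards with u
        exact ((hgm.comp (measurable_id.const_add u)).sub measurable_const).aestronglyMeasurable
      · filter_upwards [hε0.eventually hball] with u hu
        filter_upwards [ae_restrict_mem measurableSet_Ioc] with s hs
        obtain ⟨hs0, hs1⟩ := hs
        have hma : m (u+s) ≤ m u := hmanti (by linarith)
        have hmb : m (u+1) ≤ m (u+s) := hmanti (by linarith)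
        have hEd : ε u = α * (u+1) + m (u+1) - (α * u + m u) := rfl
        have habs := abs_lt.1 hu
        rw [Real.norm_eq_abs, hgv, hgv, abs_le]
        constructor
        · nlinarith [mul_nonneg hα.le hs0.le]
        · nlinarith [mul_nonneg hα.le hs0.le, mul_le_mul_of_nonneg_left hs1 hα.le]
      · have hco : IntegrableOn (fun _ : ℝ => α + 1) (Ioc (0:ℝ) 1) volume :=
          integrableOn_const measure_Ioc_lt_top.ne
        exact hco
      · filter_upwards [ae_restrict_mem measurableSet_Ioc] with s hs
        exact key s hs.1
    rw [h0] at hmain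
    exact hmain
  have hG : Tendsto (fun u => g u - ∫ s in (0:ℝ)..u, ε s) atTop
      (𝓝 (∫ s in (0:ℝ)..1, g s)) := by
    have h5 : ∀ u, g u - (∫ s in (0:ℝ)..u, ε s) =
        -(∫ s in Ioc (0:ℝ) 1, (g (u+s) - g u)) + ∫ s in (0:ℝ)..1, g s := by
      intro u
      have hint1 : IntervalIntegrable (fun s => g (u+s)) volume 0 1 := by
        have := (hgi (u+0) (u+1)).comp_add_left u
        simpa using this
      have h6 : (∫ s in (0:ℝ)..1, (g (u+s) - g u)) =
          (∫ s in (0:ℝ)..1, g (u+s)) - ∫ s in (0:ℝ)..1, (g u : ℝ) :=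
        intervalIntegral.integral_sub hint1 intervalIntegrable_const
      have h7 : (∫ s in (0:ℝ)..1, (g u : ℝ)) = g u := by simp
      have h8 : (∫ s in (0:ℝ)..1, (g (u+s) - g u)) =
          ∫ s in Ioc (0:ℝ) 1, (g (u+s) - g u) :=
        intervalIntegral.integral_of_le zero_le_one
      have h9 := hshift u
      have h10 := hwin u
      rw [← h8]
      linarith
    have h9 := hDCT.neg
    rw [neg_zero] at h9
    have h10 := h9.add_const (∫ s in (0:ℝ)..1, g s)
    rw [zero_add] at h10
    exact h10.congr (fun u => (h5 u).symm)
  set c₀ : ℝ := Real.exp (∫ s in (0:ℝ)..1, g s) with hc₀def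
  set c : ℝ → ℝ := fun x =>
    L x * Real.exp (primB εm (Real.log x) - primB εp (Real.log x)) with hcdef
  have hBA : ∀ u : ℝ, primB εm u - primB εp u = -(∫ s in (0:ℝ)..u, ε s) := by
    intro u
    have h1 := intervalIntegral.integral_sub (hεpi 0 u) (hεmi 0 u)
    have h2 : (∫ s in (0:ℝ)..u, (εp s - εm s)) = ∫ s in (0:ℝ)..u, ε s := by
      apply intervalIntegral.integral_congr
      intro s _
      exact hεsub s
    have h3 : primB εp u = ∫ s in (0:ℝ)..u, εp s := rfl
    have h4 : primB εm u = ∫ s in (0:ℝ)..u, εm s := rfl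
    rw [h3, h4]
    rw [h2] at h1
    linarith
  have hc : Tendsto c atTop (𝓝 c₀) := by
    have hcomp : Tendsto
        (fun x => Real.exp (g (Real.log x) - ∫ s in (0:ℝ)..(Real.log x), ε s))
        atTop (𝓝 c₀) :=
      (Real.continuous_exp.tendsto _).comp (hG.comp Real.tendsto_log_atTop)
    refine hcomp.congr' ?_
    filter_upwards [eventually_gt_atTop (0:ℝ)] with x hx
    have h1 : Real.exp (g (Real.log x)) = L x := by
      rw [hgL, Real.exp_log hx, Real.exp_log (hLpos x hx)]
    calc Real.exp (g (Real.log x) - ∫ s in (0:ℝ)..(Real.log x), ε s)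
        = Real.exp (g (Real.log x)) *
            Real.exp (-(∫ s in (0:ℝ)..(Real.log x), ε s)) := by
          rw [← Real.exp_add, sub_eq_add_neg]
      _ = c x := by
          have hcx : c x = L x *
              Real.exp (primB εm (Real.log x) - primB εp (Real.log x)) := rfl
          rw [hcx, h1, hBA]
  refine Or.inr (Or.inr (Or.inr ⟨mkTail εm, ?_⟩))
  refine ⟨c, c₀, mkTail εp, Real.exp_pos _, hc, ?_, ?_, ?_⟩
  · exact ⟨mkTail_isTailFun hεm0 hεmi, mkTail_ratio hεmi hεmtend⟩
  · exact ⟨mkTail_isTailFun hεp0 hεpi, mkTail_ratio hεpi hεptend⟩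
  · intro x hx1
    have hx0 : (0:ℝ) < x := lt_of_lt_of_le one_pos hx1
    have hu0 : 0 ≤ Real.log x := Real.log_nonneg hx1
    rw [mkTail_eval hu0, mkTail_eval hu0]
    set u := Real.log x
    have h1p : (0:ℝ) < 1 + u := by linarith
    have hcx : c x = L x * Real.exp (primB εm u - primB εp u) := rfl
    rw [hcx]
    rw [mul_div_assoc, div_div_div_comm, div_self h1p.ne', div_one, ← Real.exp_sub,
      mul_assoc, ← Real.exp_add]
    have hze : (primB εm u - primB εp u) + (-primB εm u - -primB εp u) = 0 := by ring
    rw [hze, Real.exp_zero, mul_one]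
end

section
/- Let X ≥ 0 have distribution F with F̄ ∈ RV_{−α} (α > 0), F̄(x) = x^{−α} L(x), E[X^α] = ∞, and m(x) = ∫_0^x v^α F(dv). Suppose the pair (F, G) satisfies (DZ4): Ḡ(x) = o(F̄(x)/m(x)) and limsup_{x→∞} sup_{√x ≤ y ≤ x} L(y)/L(x) < ∞. Let H_i be a distribution on [0,∞) whose tail satisfies H̄_i(x) ~ c F̄(x) for some constant c ∈ (0,∞), and write H̄_i(x) = x^{−α} L_i(x), m_i(x) = ∫_0^x t^α H_i(dt). Then (H_i, G) also satisfies (DZ4): limsup_{x→∞} sup_{√x ≤ y ≤ x} L_i(y)/L_i(x) < ∞, limsup_{x→∞} m_i(x)/m(x) ≤ sup_{x > 0} H̄_i(x)/F̄(x) < ∞, and Ḡ(x) = o(H̄_i(x)/m_i(x)) as x → ∞. -/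
open MeasureTheory ProbabilityTheory Filter Set
open scoped ENNReal Topology

section DZ4aux

open MeasureTheory Filter Set

variable {α x : ℝ}

private lemma minmax_nonneg (a : ℝ) (hx : 0 ≤ x) : 0 ≤ min (max a 0) x :=
  le_min (le_max_right a 0) hx

private lemma aux_integrable (μ : Measure ℝ) [IsFiniteMeasure μ] (hα : 0 ≤ α) (hx : 0 ≤ x) :
    Integrable (fun a => min (max a 0) x ^ α) μ := by
  have hcont : Continuous fun a : ℝ => min (max a 0) x ^ α :=
    ((continuous_id.max continuous_const).min continuous_const).rpow_const
      (fun a => Or.inr hα)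
  refine (integrable_const (x ^ α)).mono' hcont.aestronglyMeasurable ?_
  filter_upwards with a
  rw [Real.norm_eq_abs, abs_of_nonneg (Real.rpow_nonneg (minmax_nonneg a hx) α)]
  exact Real.rpow_le_rpow (minmax_nonneg a hx) (min_le_right _ _) hα

private lemma aux_trunc_eq (μ : Measure ℝ) [IsFiniteMeasure μ] (hμ0 : μ (Set.Iio 0) = 0)
    (hα : 0 < α) (hx : 0 < x) :
    ∫ a, min (max a 0) x ^ α ∂μ
      = (∫ t in Set.Icc (0:ℝ) x, t ^ α ∂μ) + x ^ α * (μ (Set.Ioi x)).toReal := by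
  have hint := aux_integrable μ hα.le hx.le (x := x)
  have hres : μ.restrict (Set.Ici 0) = μ := by
    apply Measure.restrict_eq_self_of_ae_mem
    rw [ae_iff]
    simpa [Set.Iio, not_le] using hμ0
  have hsplit : Set.Icc (0:ℝ) x ∪ Set.Ioi x = Set.Ici 0 := Set.Icc_union_Ioi_eq_Ici hx.le
  have hdisj : Disjoint (Set.Icc (0:ℝ) x) (Set.Ioi x) :=
    Set.disjoint_left.mpr fun a ha hb => absurd ha.2 (not_le.mpr hb)
  conv_lhs => rw [← hres, ← hsplit]
  rw [setIntegral_union hdisj measurableSet_Ioi hint.integrableOn hint.integrableOn]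
  have h1 : ∫ a in Set.Icc (0:ℝ) x, min (max a 0) x ^ α ∂μ
      = ∫ t in Set.Icc (0:ℝ) x, t ^ α ∂μ := by
    apply setIntegral_congr_fun measurableSet_Icc
    intro a ha
    simp only [max_eq_left ha.1, min_eq_left ha.2]
  have h2 : ∫ a in Set.Ioi x, min (max a 0) x ^ α ∂μ
      = x ^ α * (μ (Set.Ioi x)).toReal := by
    rw [setIntegral_congr_fun measurableSet_Ioi (g := fun _ => x ^ α) ?_, setIntegral_const,
      smul_eq_mul, mul_comm, measureReal_def]
    intro a ha
    have hax : x < a := ha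
    simp only [max_eq_left (le_trans hx.le hax.le), min_eq_right hax.le]
  rw [h1, h2]

private lemma aux_set_eq (hα : 0 < α) (hx : 0 < x) {t : ℝ} (ht : 0 < t) (htx : t < x ^ α) :
    {a : ℝ | t < min (max a 0) x ^ α} = Set.Ioi (t ^ α⁻¹) := by
  have hs0 : 0 < t ^ α⁻¹ := Real.rpow_pos_of_pos ht _
  have hsx : t ^ α⁻¹ < x := by
    rw [← Real.rpow_lt_rpow_iff (Real.rpow_nonneg ht.le _) hx.le hα,
      Real.rpow_inv_rpow ht.le hα.ne']
    exact htx
  ext a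
  simp only [Set.mem_setOf_eq, Set.mem_Ioi]
  constructor
  · intro h
    by_contra hle
    push_neg at hle
    have hble : min (max a 0) x ≤ t ^ α⁻¹ :=
      le_trans (min_le_left _ _) (max_le hle hs0.le)
    have hcon := Real.rpow_le_rpow (minmax_nonneg a hx.le) hble hα.le
    rw [Real.rpow_inv_rpow ht.le hα.ne'] at hcon
    exact absurd h (not_lt.mpr hcon)
  · intro h
    have hlt : t ^ α⁻¹ < min (max a 0) x :=
      lt_min (lt_of_lt_of_le h (le_max_left a 0)) hsx
    have hcon := Real.rpow_lt_rpow (Real.rpow_nonneg ht.le _) hlt hα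
    rwa [Real.rpow_inv_rpow ht.le hα.ne'] at hcon

private lemma aux_g_meas (μ : Measure ℝ) :
    Measurable fun t : ℝ => (μ {a | t < min (max a 0) x ^ α}).toReal := by
  have hanti : Antitone fun t : ℝ => μ {a | t < min (max a 0) x ^ α} :=
    fun t₁ t₂ h => measure_mono fun a ha => lt_of_le_of_lt h ha
  exact hanti.measurable.ennreal_toReal

private lemma aux_g_int (μ : Measure ℝ) [IsProbabilityMeasure μ] (hα : 0 < α) (hx : 0 < x) :
    IntegrableOn (fun t : ℝ => (μ {a | t < min (max a 0) x ^ α}).toReal) (Set.Ioi 0) := by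
  have hb : ∀ a : ℝ, min (max a 0) x ^ α ≤ x ^ α := fun a =>
    Real.rpow_le_rpow (minmax_nonneg a hx.le) (min_le_right _ _) hα.le
  have h1 : IntegrableOn (fun t : ℝ => (μ {a | t < min (max a 0) x ^ α}).toReal)
      (Set.Ioc 0 (x ^ α)) := by
    apply Measure.integrableOn_of_bounded (M := 1) measure_Ioc_lt_top.ne
      (aux_g_meas μ).aestronglyMeasurable
    filter_upwards with t
    rw [Real.norm_eq_abs, abs_of_nonneg ENNReal.toReal_nonneg]
    simpa using ENNReal.toReal_mono ENNReal.one_ne_top prob_le_one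
  have h2 : IntegrableOn (fun t : ℝ => (μ {a | t < min (max a 0) x ^ α}).toReal)
      (Set.Ioi (x ^ α)) := by
    rw [integrableOn_congr_fun (g := fun _ => (0:ℝ)) ?_ measurableSet_Ioi]
    · exact integrableOn_zero
    · intro t ht
      have hemp : {a : ℝ | t < min (max a 0) x ^ α} = ∅ := by
        ext a
        simp only [Set.mem_setOf_eq, Set.mem_empty_iff_false, iff_false, not_lt]
        exact le_trans (hb a) (le_of_lt ht)
      simp [hemp]
  rw [← Set.Ioc_union_Ioi_eq_Ioi (Real.rpow_pos_of_pos hx α).le]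
  exact h1.union h2

private lemma aux_trunc_le (μ ν : Measure ℝ) [IsProbabilityMeasure μ] [IsProbabilityMeasure ν]
    (hα : 0 < α) (hx : 0 < x) {S : ℝ} (hS : 0 ≤ S)
    (h : ∀ s : ℝ, 0 < s → (μ (Set.Ioi s)).toReal ≤ S * (ν (Set.Ioi s)).toReal) :
    ∫ a, min (max a 0) x ^ α ∂μ ≤ S * ∫ a, min (max a 0) x ^ α ∂ν := by
  have hnn : ∀ κ : Measure ℝ, 0 ≤ᵐ[κ] fun a : ℝ => min (max a 0) x ^ α := fun κ =>
    ae_of_all _ fun a => Real.rpow_nonneg (minmax_nonneg a hx.le) α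
  rw [(aux_integrable μ hα.le hx.le).integral_eq_integral_meas_lt (hnn μ),
      (aux_integrable ν hα.le hx.le).integral_eq_integral_meas_lt (hnn ν),
      ← integral_const_mul]
  apply setIntegral_mono_on (aux_g_int μ hα hx) ((aux_g_int ν hα hx).const_mul S)
    measurableSet_Ioi
  intro t ht
  have ht0 : 0 < t := ht
  by_cases htx : t < x ^ α
  · rw [aux_set_eq hα hx ht0 htx]
    exact h _ (Real.rpow_pos_of_pos ht0 _)
  · have hemp : {a : ℝ | t < min (max a 0) x ^ α} = ∅ := by
      ext a
      simp only [Set.mem_setOf_eq, Set.mem_empty_iff_false, iff_false, not_lt]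
      exact le_trans (Real.rpow_le_rpow (minmax_nonneg a hx.le) (min_le_right _ _) hα.le)
        (not_lt.mp htx)
    rw [hemp]
    simp

private lemma aux_mtrunc_le (μ ν : Measure ℝ) [IsProbabilityMeasure μ] [IsProbabilityMeasure ν]
    (hμ0 : μ (Set.Iio 0) = 0) (hν0 : ν (Set.Iio 0) = 0)
    (hα : 0 < α) (hx : 0 < x) {S : ℝ} (hS : 0 ≤ S)
    (h : ∀ s : ℝ, 0 < s → (μ (Set.Ioi s)).toReal ≤ S * (ν (Set.Ioi s)).toReal) :
    ∫ t in Set.Icc (0:ℝ) x, t ^ α ∂μ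
      ≤ S * ((∫ t in Set.Icc (0:ℝ) x, t ^ α ∂ν) + x ^ α * (ν (Set.Ioi x)).toReal) := by
  have key := aux_trunc_le μ ν hα hx hS h
  rw [aux_trunc_eq μ hμ0 hα hx, aux_trunc_eq ν hν0 hα hx] at key
  have hnn : 0 ≤ x ^ α * (μ (Set.Ioi x)).toReal :=
    mul_nonneg (Real.rpow_nonneg hx.le α) ENNReal.toReal_nonneg
  linarith

private lemma aux_integrableOn_rpow (μ : Measure ℝ) [IsFiniteMeasure μ] (hα : 0 ≤ α)
    (hx : 0 ≤ x) : IntegrableOn (fun t : ℝ => t ^ α) (Set.Icc 0 x) μ := by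
  have hcont : Continuous fun t : ℝ => t ^ α :=
    continuous_id.rpow_const fun t => Or.inr hα
  apply Measure.integrableOn_of_bounded (M := x ^ α) (measure_ne_top μ _)
    hcont.aestronglyMeasurable
  filter_upwards [ae_restrict_mem measurableSet_Icc] with t ht
  rw [Real.norm_eq_abs, abs_of_nonneg (Real.rpow_nonneg ht.1 α)]
  exact Real.rpow_le_rpow ht.1 ht.2 hα

private lemma aux_LofTail {T : ℝ → ℝ} {μ : Measure ℝ} {α x : ℝ} (hx : 0 < x)
    (h : (μ (Set.Ioi x)).toReal = x ^ (-α) * T x) :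
    T x = x ^ α * (μ (Set.Ioi x)).toReal := by
  have hxα : (0:ℝ) < x ^ α := Real.rpow_pos_of_pos hx α
  rw [h, Real.rpow_neg hx.le]
  field_simp

end DZ4aux

set_option maxHeartbeats 2000000 in
/-- If `(F, G)` satisfies (DZ4) and `H̄_i(x) ~ c F̄(x)`, then `(H_i, G)` also
satisfies (DZ4). -/
theorem DZ4_inherited (α c : ℝ) (hα : 0 < α) (hc : 0 < c)
    (μF μG μH : Measure ℝ)
    [IsProbabilityMeasure μF] [IsProbabilityMeasure μG] [IsProbabilityMeasure μH]
    (hF0 : μF (Set.Iio 0) = 0) (hG0 : μG (Set.Iio 0) = 0) (hH0 : μH (Set.Iio 0) = 0)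
    (L Li : ℝ → ℝ)
    (hRV : ∀ y : ℝ, 0 < y → Tendsto
      (fun x => (μF (Set.Ioi (x * y))).toReal / (μF (Set.Ioi x)).toReal)
      atTop (𝓝 (y ^ (-α))))
    (hL : ∀ x > 0, (μF (Set.Ioi x)).toReal = x ^ (-α) * L x)
    (hLi : ∀ x > 0, (μH (Set.Ioi x)).toReal = x ^ (-α) * Li x)
    (hinf : ∫⁻ v, ENNReal.ofReal (v ^ α) ∂μF = ⊤)
    (hGo : (fun x => (μG (Set.Ioi x)).toReal) =o[atTop]
      (fun x => (μF (Set.Ioi x)).toReal / ∫ v in Set.Icc (0:ℝ) x, v ^ α ∂μF))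
    (hsup : ∃ M : ℝ, ∀ᶠ x : ℝ in atTop, ∀ y ∈ Set.Icc (Real.sqrt x) x, L y / L x ≤ M)
    (hHtail : Tendsto (fun x => (μH (Set.Ioi x)).toReal / (μF (Set.Ioi x)).toReal)
      atTop (𝓝 c)) :
    (∃ M : ℝ, ∀ᶠ x : ℝ in atTop, ∀ y ∈ Set.Icc (Real.sqrt x) x, Li y / Li x ≤ M) ∧
    (∃ S : ℝ, (∀ x > 0, (μH (Set.Ioi x)).toReal ≤ S * (μF (Set.Ioi x)).toReal) ∧
      Filter.limsup (fun x => (∫ t in Set.Icc (0:ℝ) x, t ^ α ∂μH) /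
        ∫ v in Set.Icc (0:ℝ) x, v ^ α ∂μF) atTop ≤ S) ∧
    Tendsto (fun x => (μG (Set.Ioi x)).toReal *
      (∫ t in Set.Icc (0:ℝ) x, t ^ α ∂μH) / (μH (Set.Ioi x)).toReal)
      atTop (𝓝 0) := by
  have hc2 : 0 < c / 2 := by positivity
  have hup : ∀ᶠ x : ℝ in atTop,
      (μH (Set.Ioi x)).toReal / (μF (Set.Ioi x)).toReal < 2 * c :=
    hHtail.eventually_lt_const (by linarith)
  have hlo : ∀ᶠ x : ℝ in atTop,
      c / 2 < (μH (Set.Ioi x)).toReal / (μF (Set.Ioi x)).toReal :=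
    hHtail.eventually_const_lt (by linarith)
  obtain ⟨x₀', hx₀'⟩ := eventually_atTop.mp (hlo.and hup)
  set x₀ : ℝ := max x₀' 1 with hx₀def
  have hx₀pos : (0:ℝ) < x₀ := lt_of_lt_of_le one_pos (le_max_right _ _)
  have hFpos : ∀ b ≥ x₀, 0 < (μF (Set.Ioi b)).toReal := by
    intro b hb
    obtain ⟨h1, -⟩ := hx₀' b (le_trans (le_max_left _ _) hb)
    rcases lt_or_ge 0 ((μF (Set.Ioi b)).toReal) with h | h
    · exact h
    · have h0 : (μF (Set.Ioi b)).toReal = 0 := le_antisymm h ENNReal.toReal_nonneg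
      rw [h0, div_zero] at h1
      linarith
  have hHle : ∀ b ≥ x₀, (μH (Set.Ioi b)).toReal ≤ 2 * c * (μF (Set.Ioi b)).toReal := by
    intro b hb
    obtain ⟨-, h2⟩ := hx₀' b (le_trans (le_max_left _ _) hb)
    rw [div_lt_iff₀ (hFpos b hb)] at h2
    linarith
  have hHge : ∀ b ≥ x₀, c / 2 * (μF (Set.Ioi b)).toReal ≤ (μH (Set.Ioi b)).toReal := by
    intro b hb
    obtain ⟨h1, -⟩ := hx₀' b (le_trans (le_max_left _ _) hb)
    rw [lt_div_iff₀ (hFpos b hb)] at h1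
    linarith
  have hFanti : ∀ s t : ℝ, s ≤ t → (μF (Set.Ioi t)).toReal ≤ (μF (Set.Ioi s)).toReal :=
    fun s t hst =>
      ENNReal.toReal_mono (measure_ne_top μF _) (measure_mono (Set.Ioi_subset_Ioi hst))
  have hFx₀ : 0 < (μF (Set.Ioi x₀)).toReal := hFpos x₀ le_rfl
  set S₀ : ℝ := max (2 * c) (1 / (μF (Set.Ioi x₀)).toReal) with hS₀def
  have hS₀pos : 0 < S₀ := lt_of_lt_of_le (by positivity) (le_max_left _ _)
  have htail : ∀ s : ℝ, 0 < s →
      (μH (Set.Ioi s)).toReal ≤ S₀ * (μF (Set.Ioi s)).toReal := by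
    intro s hs
    rcases le_or_gt x₀ s with hcase | hcase
    · exact le_trans (hHle s hcase)
        (mul_le_mul_of_nonneg_right (le_max_left _ _) ENNReal.toReal_nonneg)
    · have h1 : (μH (Set.Ioi s)).toReal ≤ 1 := by
        have := ENNReal.toReal_mono (measure_ne_top μH Set.univ)
          (measure_mono (Set.subset_univ (Set.Ioi s)))
        simpa using this
      have h2 : (μF (Set.Ioi x₀)).toReal ≤ (μF (Set.Ioi s)).toReal := hFanti s x₀ hcase.le
      calc (μH (Set.Ioi s)).toReal ≤ 1 := h1
        _ = (1 / (μF (Set.Ioi x₀)).toReal) * (μF (Set.Ioi x₀)).toReal := by field_simp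
        _ ≤ S₀ * (μF (Set.Ioi s)).toReal :=
            mul_le_mul (le_max_right _ _) h2 hFx₀.le hS₀pos.le
  -- constants for the truncated-moment comparison
  have h2α : (1:ℝ) < 2 ^ α :=
    (Real.one_lt_rpow_iff_of_pos two_pos).mpr (Or.inl ⟨one_lt_two, hα⟩)
  have h2αpos : (0:ℝ) < 2 ^ α := by linarith
  set δ : ℝ := (2 ^ α - 1) / 2 with hδdef
  have hδpos : 0 < δ := by rw [hδdef]; linarith
  set C : ℝ := 2 ^ α / δ with hCdef
  have hCpos : 0 < C := div_pos h2αpos hδpos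
  set K : ℝ := S₀ * (1 + C) with hKdef
  have hKpos : 0 < K := by positivity
  have hhalflim : ((1:ℝ)/2) ^ (-α) = 2 ^ α := by
    rw [one_div, Real.inv_rpow (by norm_num : (0:ℝ) ≤ 2),
      Real.rpow_neg (by norm_num : (0:ℝ) ≤ 2), inv_inv]
  have hratio : ∀ᶠ x : ℝ in atTop,
      1 + δ < (μF (Set.Ioi (x * (1/2)))).toReal / (μF (Set.Ioi x)).toReal := by
    apply (hRV (1/2) (by norm_num)).eventually_const_lt
    rw [hhalflim, hδdef]
    linarith
  -- lower bound for m_F and upper bound for x^α F̄(x)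
  have hmF_low : ∀ᶠ x : ℝ in atTop,
      (0 < ∫ v in Set.Icc (0:ℝ) x, v ^ α ∂μF) ∧
      x ^ α * (μF (Set.Ioi x)).toReal ≤ C * ∫ v in Set.Icc (0:ℝ) x, v ^ α ∂μF := by
    filter_upwards [hratio, eventually_ge_atTop (max x₀ 1)] with x h1 hx
    have hxpos : (0:ℝ) < x := lt_of_lt_of_le one_pos (le_trans (le_max_right _ _) hx)
    have hFx : 0 < (μF (Set.Ioi x)).toReal := hFpos x (le_trans (le_max_left _ _) hx)
    have hxαpos : 0 < x ^ α := Real.rpow_pos_of_pos hxpos α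
    rw [lt_div_iff₀ hFx] at h1
    have hsplit : Set.Ioc (x * (1/2)) x ∪ Set.Ioi x = Set.Ioi (x * (1/2)) :=
      Set.Ioc_union_Ioi_eq_Ioi (by linarith)
    have hdisj : Disjoint (Set.Ioc (x * (1/2)) x) (Set.Ioi x) :=
      Set.disjoint_left.mpr fun a ha hb => absurd ha.2 (not_le.mpr hb)
    have hmeasadd : μF (Set.Ioi (x * (1/2)))
        = μF (Set.Ioc (x * (1/2)) x) + μF (Set.Ioi x) := by
      rw [← hsplit, measure_union hdisj measurableSet_Ioi]
    have hIoc : (μF (Set.Ioc (x * (1/2)) x)).toReal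
        = (μF (Set.Ioi (x * (1/2)))).toReal - (μF (Set.Ioi x)).toReal := by
      rw [hmeasadd, ENNReal.toReal_add (measure_ne_top _ _) (measure_ne_top _ _)]
      ring
    have hint : IntegrableOn (fun t : ℝ => t ^ α) (Set.Icc 0 x) μF :=
      aux_integrableOn_rpow μF hα.le hxpos.le
    have hsub : Set.Ioc (x * (1/2)) x ⊆ Set.Icc 0 x := by
      intro a ha
      constructor
      · have := ha.1; linarith
      · exact ha.2
    have hmono : ∫ v in Set.Ioc (x * (1/2)) x, v ^ α ∂μF
        ≤ ∫ v in Set.Icc (0:ℝ) x, v ^ α ∂μF := by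
      apply setIntegral_mono_set hint ?_ (HasSubset.Subset.eventuallyLE hsub)
      filter_upwards [ae_restrict_mem measurableSet_Icc] with v hv
        using Real.rpow_nonneg hv.1 α
    have hconst : (x * (1/2)) ^ α * (μF (Set.Ioc (x * (1/2)) x)).toReal
        ≤ ∫ v in Set.Ioc (x * (1/2)) x, v ^ α ∂μF := by
      rw [mul_comm, ← smul_eq_mul]
      apply setIntegral_ge_of_const_le measurableSet_Ioc (measure_ne_top _ _)
        (fun v hv => Real.rpow_le_rpow (by linarith) hv.1.le hα.le)
        (hint.mono_set hsub)
    have hxhalfpow : (x * (1/2)) ^ α = x ^ α / 2 ^ α := by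
      rw [mul_one_div, Real.div_rpow hxpos.le (by norm_num)]
    have hged : δ / 2 ^ α * (x ^ α * (μF (Set.Ioi x)).toReal)
        ≤ ∫ v in Set.Icc (0:ℝ) x, v ^ α ∂μF := by
      calc δ / 2 ^ α * (x ^ α * (μF (Set.Ioi x)).toReal)
          = (x * (1/2)) ^ α * (δ * (μF (Set.Ioi x)).toReal) := by
            rw [hxhalfpow]; ring
        _ ≤ (x * (1/2)) ^ α * (μF (Set.Ioc (x * (1/2)) x)).toReal := by
            apply mul_le_mul_of_nonneg_left ?_ (by positivity)
            rw [hIoc]; linarith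
        _ ≤ ∫ v in Set.Ioc (x * (1/2)) x, v ^ α ∂μF := hconst
        _ ≤ ∫ v in Set.Icc (0:ℝ) x, v ^ α ∂μF := hmono
    constructor
    · exact lt_of_lt_of_le (by positivity) hged
    · rw [hCdef, div_mul_eq_mul_div, le_div_iff₀ hδpos]
      rw [div_mul_eq_mul_div, div_le_iff₀ h2αpos] at hged
      linarith
  -- key eventual comparison of truncated moments
  have hmain : ∀ᶠ x : ℝ in atTop,
      ((∫ t in Set.Icc (0:ℝ) x, t ^ α ∂μH) ≤ K * ∫ v in Set.Icc (0:ℝ) x, v ^ α ∂μF)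
      ∧ 0 < ∫ v in Set.Icc (0:ℝ) x, v ^ α ∂μF := by
    filter_upwards [hmF_low, eventually_ge_atTop (1:ℝ)] with x hlow hx
    have hxpos : (0:ℝ) < x := lt_of_lt_of_le one_pos hx
    obtain ⟨hmFpos, hub⟩ := hlow
    have hkey := aux_mtrunc_le μH μF hH0 hF0 hα hxpos hS₀pos.le htail (x := x)
    refine ⟨?_, hmFpos⟩
    calc ∫ t in Set.Icc (0:ℝ) x, t ^ α ∂μH
        ≤ S₀ * ((∫ v in Set.Icc (0:ℝ) x, v ^ α ∂μF)
            + x ^ α * (μF (Set.Ioi x)).toReal) := hkey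
      _ ≤ S₀ * ((∫ v in Set.Icc (0:ℝ) x, v ^ α ∂μF)
            + C * ∫ v in Set.Icc (0:ℝ) x, v ^ α ∂μF) := by nlinarith
      _ = K * ∫ v in Set.Icc (0:ℝ) x, v ^ α ∂μF := by rw [hKdef]; ring
  obtain ⟨M, hM⟩ := hsup
  obtain ⟨x₁', hx₁'⟩ := eventually_atTop.mp hM
  refine ⟨⟨4 * M, ?_⟩, ⟨K, ?_, ?_⟩, ?_⟩
  · -- part 1 : the slowly varying part of H inherits the sup condition
    rw [eventually_atTop]
    refine ⟨max (max x₁' 1) (x₀ ^ 2), fun x hx y hy => ?_⟩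
    have hx1 : (1:ℝ) ≤ x := le_trans (le_trans (le_max_right _ _) (le_max_left _ _)) hx
    have hxx₀ : x₀ ^ 2 ≤ x := le_trans (le_max_right _ _) hx
    have hsx : x₀ ≤ Real.sqrt x := by
      rw [show x₀ = Real.sqrt (x₀ ^ 2) from (Real.sqrt_sq hx₀pos.le).symm]
      exact Real.sqrt_le_sqrt hxx₀
    have hy₀ : x₀ ≤ y := le_trans hsx hy.1
    have hyx : y ≤ x := hy.2
    have hx₀x : x₀ ≤ x := le_trans hy₀ hyx
    have hypos : 0 < y := lt_of_lt_of_le hx₀pos hy₀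
    have hxpos : 0 < x := lt_of_lt_of_le hx₀pos hx₀x
    have hLxv := aux_LofTail hxpos (hL x hxpos)
    have hLyv := aux_LofTail hypos (hL y hypos)
    have hLixv := aux_LofTail hxpos (hLi x hxpos)
    have hLiyv := aux_LofTail hypos (hLi y hypos)
    have hFy : 0 < (μF (Set.Ioi y)).toReal := hFpos y hy₀
    have hFx : 0 < (μF (Set.Ioi x)).toReal := hFpos x hx₀x
    have hxαpos : 0 < x ^ α := Real.rpow_pos_of_pos hxpos α
    have hyαpos : 0 < y ^ α := Real.rpow_pos_of_pos hypos α
    have hLxpos : 0 < L x := by rw [hLxv]; positivity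
    have hLynn : 0 ≤ L y := by
      rw [hLyv]; positivity
    have hLiyle : Li y ≤ 2 * c * L y := by
      rw [hLiyv, hLyv]
      have := hHle y hy₀
      nlinarith
    have hLixge : c / 2 * L x ≤ Li x := by
      rw [hLixv, hLxv]
      have := hHge x hx₀x
      nlinarith
    have hMy : L y / L x ≤ M :=
      hx₁' x (le_trans (le_trans (le_max_left _ _) (le_max_left _ _)) hx) y hy
    calc Li y / Li x ≤ (2 * c * L y) / (c / 2 * L x) :=
          div_le_div₀ (by positivity) hLiyle (by positivity) hLixge
      _ = 4 * (L y / L x) := by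
          field_simp
          ring
      _ ≤ 4 * M := by linarith
  · -- part 2a : the uniform tail bound
    intro s hs
    have hS₀K : S₀ ≤ K := by
      rw [hKdef]
      nlinarith
    exact le_trans (htail s hs)
      (mul_le_mul_of_nonneg_right hS₀K ENNReal.toReal_nonneg)
  · -- part 2b : limsup bound
    have hbd : ∀ᶠ x : ℝ in atTop,
        (∫ t in Set.Icc (0:ℝ) x, t ^ α ∂μH) /
          (∫ v in Set.Icc (0:ℝ) x, v ^ α ∂μF) ≤ K := by
      filter_upwards [hmain] with x hx
      obtain ⟨h1, h2⟩ := hx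
      rw [div_le_iff₀ h2]
      linarith
    apply Filter.limsup_le_of_le ?_ hbd
    apply Filter.isCoboundedUnder_le_of_eventually_le atTop (x := 0)
    filter_upwards [hmain] with x hx
    obtain ⟨-, h2⟩ := hx
    have hnum : 0 ≤ ∫ t in Set.Icc (0:ℝ) x, t ^ α ∂μH :=
      setIntegral_nonneg measurableSet_Icc fun t ht => Real.rpow_nonneg ht.1 α
    exact div_nonneg hnum h2.le
  · -- part 3 : Ḡ m_H / H̄ → 0
    rw [NormedAddCommGroup.tendsto_nhds_zero]
    intro ε hε
    have hε'pos : 0 < ε * c / (8 * K) := by positivity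
    filter_upwards [hGo.def hε'pos, hmain, eventually_ge_atTop (max x₀ 1)]
      with x hG hx12 hx
    obtain ⟨hmH, hmF⟩ := hx12
    have hxx₀ : x₀ ≤ x := le_trans (le_max_left _ _) hx
    have hFx : 0 < (μF (Set.Ioi x)).toReal := hFpos x hxx₀
    have hHx : 0 < (μH (Set.Ioi x)).toReal :=
      lt_of_lt_of_le (by positivity) (hHge x hxx₀)
    have hGnn : 0 ≤ (μG (Set.Ioi x)).toReal := ENNReal.toReal_nonneg
    have hmHnn : 0 ≤ ∫ t in Set.Icc (0:ℝ) x, t ^ α ∂μH :=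
      setIntegral_nonneg measurableSet_Icc fun t ht => Real.rpow_nonneg ht.1 α
    rw [Real.norm_eq_abs, abs_of_nonneg
      (div_nonneg (mul_nonneg hGnn hmHnn) hHx.le)]
    rw [Real.norm_eq_abs, Real.norm_eq_abs, abs_of_nonneg hGnn,
      abs_of_nonneg (div_nonneg ENNReal.toReal_nonneg hmF.le)] at hG
    have h1 : (μG (Set.Ioi x)).toReal * ∫ t in Set.Icc (0:ℝ) x, t ^ α ∂μH
        ≤ (ε * c / (8 * K)) * K * (μF (Set.Ioi x)).toReal := by
      calc (μG (Set.Ioi x)).toReal * ∫ t in Set.Icc (0:ℝ) x, t ^ α ∂μH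
          ≤ (ε * c / (8 * K) * ((μF (Set.Ioi x)).toReal /
              ∫ v in Set.Icc (0:ℝ) x, v ^ α ∂μF))
            * (K * ∫ v in Set.Icc (0:ℝ) x, v ^ α ∂μF) :=
            mul_le_mul hG hmH hmHnn (by positivity)
        _ = (ε * c / (8 * K)) * K * (μF (Set.Ioi x)).toReal := by
            field_simp
    have h2 : (μG (Set.Ioi x)).toReal * (∫ t in Set.Icc (0:ℝ) x, t ^ α ∂μH)
          / (μH (Set.Ioi x)).toReal
        ≤ ((ε * c / (8 * K)) * K * (μF (Set.Ioi x)).toReal)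
          / (c / 2 * (μF (Set.Ioi x)).toReal) :=
      div_le_div₀ (by positivity) h1 (by positivity) (hHge x hxx₀)
    have h3 : ((ε * c / (8 * K)) * K * (μF (Set.Ioi x)).toReal)
          / (c / 2 * (μF (Set.Ioi x)).toReal) = ε / 4 := by
      field_simp
      ring
    rw [h3] at h2
    linarith
end
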